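/- Theorem 3.1: Let X be a set, h_1,…,h_r : X → ℝ fixed functions, and let A(X) be a permissible class of functions on X, i.e., a set of real-valued functions on X such that for every minimal closed path p = {x_1,…,x_n} ⊆ X with associated vector λ = (λ_1,…,λ_n), there exists f_0 ∈ A(X) with Σ_{j=1}^n λ_j f_0(x_j) ≠ 0. If B(h_1,…,h_r;X) = A(X), then B(h_1,…,h_r;X) = T(X), i.e., every function f : X → ℝ equals Σ_{i=1}^r g_i ∘ h_i for some g_1,…,g_r : ℝ → ℝ. -/
import Mathlib


open scoped Classical

/-- `⟨p, lam⟩` is a closed path–vector pair with respect to the functions `h i`: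
`p` is a nonempty finite set of (distinct) points, the weights `lam` are nonzero on `p`,
and for every index `i` and every value `t`, the weights over the level set
`{x ∈ p | h i x = t}` sum to zero. -/
def ClosedPathPair {α : Type*} {r : ℕ} (h : Fin r → α → ℝ)
    (p : Finset α) (lam : α → ℝ) : Prop :=
  p.Nonempty ∧ (∀ x ∈ p, lam x ≠ 0) ∧
    ∀ (i : Fin r) (t : ℝ), ∑ x ∈ p.filter (fun x => h i x = t), lam x = 0

/-- `p` is a closed path with respect to the functions `h i`. -/
def IsClosedPath {α : Type*} {r : ℕ} (h : Fin r → α → ℝ) (p : Finset α) : Prop :=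
  ∃ lam : α → ℝ, ClosedPathPair h p lam

/-- `p` is a minimal closed path: it is a closed path and no proper subset of it is one. -/
def IsMinimalClosedPath {α : Type*} {r : ℕ} (h : Fin r → α → ℝ) (p : Finset α) : Prop :=
  IsClosedPath h p ∧ ∀ q ⊂ p, ¬ IsClosedPath h q

/-- Any closed path–vector pair is orthogonal to every superposition. -/
lemma closedPath_orth {X : Type*} {r : ℕ} (h : Fin r → X → ℝ) {p : Finset X} {lam : X → ℝ}
    (hp : ClosedPathPair h p lam) (g : Fin r → ℝ → ℝ) :
    ∑ x ∈ p, lam x * ∑ i, g i (h i x) = 0 := by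
  simp_rw [Finset.mul_sum]
  rw [Finset.sum_comm]
  refine Finset.sum_eq_zero fun i _ => ?_
  rw [← Finset.sum_fiberwise_of_maps_to (g := h i) (t := p.image (h i))
    (fun x hx => Finset.mem_image_of_mem _ hx) (fun x => lam x * g i (h i x))]
  refine Finset.sum_eq_zero fun t _ => ?_
  have : ∑ x ∈ p.filter (fun x => h i x = t), lam x * g i (h i x)
      = ∑ x ∈ p.filter (fun x => h i x = t), lam x * g i t :=
    Finset.sum_congr rfl fun x hx => by rw [(Finset.mem_filter.1 hx).2]
  rw [this, ← Finset.sum_mul, hp.2.2 i t, zero_mul]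

/-- Every closed path contains a minimal closed path. -/
lemma exists_minimal_closedPath {X : Type*} {r : ℕ} (h : Fin r → X → ℝ) :
    ∀ (n : ℕ) (p : Finset X), p.card ≤ n → IsClosedPath h p →
      ∃ q, q ⊆ p ∧ IsMinimalClosedPath h q := by
  intro n
  induction n with
  | zero =>
    intro p hcard hp
    obtain ⟨lam, hne, -, -⟩ := hp
    exact absurd (Finset.card_eq_zero.1 (Nat.le_zero.1 hcard) ▸ hne) (by simp)
  | succ n ih =>
    intro p hcard hp
    by_cases hqe : ∃ q, q ⊂ p ∧ IsClosedPath h q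
    · obtain ⟨q, hqp, hq⟩ := hqe
      have : q.card ≤ n := by
        have := Finset.card_lt_card hqp
        omega
      obtain ⟨q', hq'q, hq'⟩ := ih q this hq
      exact ⟨q', hq'q.trans hqp.subset, hq'⟩
    · exact ⟨p, subset_rfl, hp, fun q hqp hq => hqe ⟨q, hqp, hq⟩⟩

/-- Theorem 3.1: if `B(h_1,…,h_r;X)` equals a permissible class `A(X)`, then
`B(h_1,…,h_r;X) = T(X)`. -/
theorem superpositions_eq_all_of_eq_permissible {X : Type*} {r : ℕ} (h : Fin r → X → ℝ)
    (A : Set (X → ℝ))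
    (hA : ∀ (p : Finset X) (lam : X → ℝ), IsMinimalClosedPath h p →
      ClosedPathPair h p lam → ∃ f0 ∈ A, ∑ x ∈ p, lam x * f0 x ≠ 0)
    (hBA : {f : X → ℝ | ∃ g : Fin r → ℝ → ℝ, ∀ x, f x = ∑ i, g i (h i x)} = A) :
    ∀ f : X → ℝ, ∃ g : Fin r → ℝ → ℝ, ∀ x, f x = ∑ i, g i (h i x) := by
  -- Step 1: there are no closed paths at all.
  have hnc : ∀ (p : Finset X) (lam : X → ℝ), ¬ ClosedPathPair h p lam := by
    intro p lam hpl
    obtain ⟨q, -, hqmin⟩ := exists_minimal_closedPath h p.card p le_rfl ⟨lam, hpl⟩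
    obtain ⟨lam', hlam'⟩ := hqmin.1
    obtain ⟨f0, hf0A, hne⟩ := hA q lam' hqmin hlam'
    rw [← hBA] at hf0A
    obtain ⟨g, hg⟩ := hf0A
    apply hne
    calc ∑ x ∈ q, lam' x * f0 x = ∑ x ∈ q, lam' x * ∑ i, g i (h i x) :=
          Finset.sum_congr rfl fun x _ => by rw [hg]
      _ = 0 := closedPath_orth h hlam' g
  -- Step 2: the associated linear map is injective, so it has a left inverse.
  intro f
  let T : (X →₀ ℝ) →ₗ[ℝ] ((Fin r × ℝ) →₀ ℝ) :=
    Finsupp.lift ((Fin r × ℝ) →₀ ℝ) ℝ X (fun x => ∑ i, Finsupp.single (i, h i x) 1)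
  have hTsingle : ∀ x : X, T (Finsupp.single x 1) = ∑ i, Finsupp.single (i, h i x) 1 := by
    intro x
    simp [T, Finsupp.lift_apply, Finsupp.sum_single_index]
  have hker : LinearMap.ker T = ⊥ := by
    rw [LinearMap.ker_eq_bot']
    intro v hv
    by_contra hv0
    refine hnc v.support v ⟨Finsupp.support_nonempty_iff.2 hv0,
      fun x hx => Finsupp.mem_support_iff.1 hx, fun i t => ?_⟩
    have h0 : (T v) (i, t) = 0 := by rw [hv]; rfl
    have hTv : (T v) (i, t) = ∑ x ∈ v.support, v x * (if h i x = t then 1 else 0) := by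
      rw [show (T v) = v.sum fun x c => c • ∑ i, Finsupp.single (i, h i x) 1 from
        Finsupp.lift_apply _ _ _ _ _]
      rw [Finsupp.sum_apply, Finsupp.sum]
      refine Finset.sum_congr rfl fun x _ => ?_
      rw [Finsupp.smul_apply, Finset.sum_apply', smul_eq_mul]
      congr 1
      rw [Finset.sum_eq_single i]
      · rw [Finsupp.single_apply]
        by_cases ht : h i x = t <;> simp [ht, Prod.ext_iff]
      · intro j _ hji
        rw [Finsupp.single_apply, if_neg]
        simp [Prod.ext_iff, hji]
      · simp
    rw [hTv] at h0
    rw [← h0, Finset.sum_filter]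
    exact Finset.sum_congr rfl fun x _ => by split <;> simp_all
  obtain ⟨S, hS⟩ := LinearMap.exists_leftInverse_of_injective T hker
  let fl : (X →₀ ℝ) →ₗ[ℝ] ℝ := Finsupp.lift ℝ ℝ X f
  refine ⟨fun i t => fl (S (Finsupp.single (i, t) 1)), fun x => ?_⟩
  have h1 : f x = fl (Finsupp.single x 1) := by
    simp [fl, Finsupp.lift_apply, Finsupp.sum_single_index]
  have h2 : (Finsupp.single x 1 : X →₀ ℝ) = S (T (Finsupp.single x 1)) := by
    rw [← LinearMap.comp_apply, hS]; rfl
  rw [h1, h2, hTsingle, map_sum, map_sum]
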